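/- For 0 < r < 1, the Stieltjes transform of the measure μ with density k(x:r), namely G_μ(z) = ∫_{−r}^{r} k(x:r)/(z−x) dx, equals (z(z²−r²) − √(1−r²)√(z²−r²)) / ((z²−1)(z²−r²)) for real z > 1 (with the positive square root of z²−r²). -/

import Mathlib

open Real

/-- Derivative of the key arcsin antiderivative, for `r < a`. -/
lemma hasDerivAt_phi (r a x : ℝ) (hr : 0 < r) (ha : r < a)
    (hx1 : -r < x) (hx2 : x < r) :
    HasDerivAt (fun y => Real.arcsin ((r^2 - a*y)/(r*(a-y))))
      (-(Real.sqrt (a^2 - r^2) / ((a - x) * Real.sqrt (r^2 - x^2)))) x := by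
  have hax : 0 < a - x := by linarith
  have hrx : 0 < r^2 - x^2 := by nlinarith
  have har : 0 < a^2 - r^2 := by nlinarith
  have hden : r*(a-x) ≠ 0 := by positivity
  have hsq : (r^2 - a*x)^2 < (r*(a-x))^2 := by nlinarith
  have hv1 : (r^2 - a*x)/(r*(a-x)) ≠ 1 := by
    intro h
    rw [div_eq_one_iff_eq hden] at h
    nlinarith
  have hv2 : (r^2 - a*x)/(r*(a-x)) ≠ -1 := by
    intro h
    rw [div_eq_iff hden] at h
    nlinarith
  have hv : HasDerivAt (fun y => (r^2 - a*y)/(r*(a-y))) ((r^2 - a^2)/(r*(a-x)^2)) x := by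
    have h1 : HasDerivAt (fun y : ℝ => r^2 - a*y) (-a) x := by
      simpa using ((hasDerivAt_id x).const_mul a).const_sub (r^2)
    have h2 : HasDerivAt (fun y : ℝ => r*(a-y)) (-r) x := by
      simpa using ((hasDerivAt_const x a).sub (hasDerivAt_id x)).const_mul r
    have := h1.div h2 hden
    convert this using 1 <;> try rfl
    field_simp
    ring
  have harc := (Real.hasDerivAt_arcsin hv2 hv1).comp x hv
  convert harc using 1 <;> try rfl
  have hkey : 1 - ((r^2 - a*x)/(r*(a-x)))^2
      = (Real.sqrt (a^2-r^2) * Real.sqrt (r^2-x^2) / (r*(a-x)))^2 := by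
    rw [eq_comm, div_pow, mul_pow, Real.sq_sqrt har.le, Real.sq_sqrt hrx.le]
    field_simp
    ring
  rw [hkey, Real.sqrt_sq (by positivity)]
  have hs : Real.sqrt (a^2-r^2) ≠ 0 := by positivity
  have ht : Real.sqrt (r^2-x^2) ≠ 0 := by positivity
  have hs2 : Real.sqrt (a^2-r^2)^2 = a^2 - r^2 := Real.sq_sqrt har.le
  field_simp
  linear_combination (-1) * hs2

theorem konno_stieltjes_transform (r : ℝ) (hr0 : 0 < r) (hr1 : r < 1)
    (z : ℝ) (hz : 1 < z) :
    ∫ x in (-r)..r,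
      (Real.sqrt (1 - r^2) / (Real.pi * (1 - x^2) * Real.sqrt (r^2 - x^2))) / (z - x)
    = (z * (z^2 - r^2) - Real.sqrt (1 - r^2) * Real.sqrt (z^2 - r^2)) /
        ((z^2 - 1) * (z^2 - r^2)) := by
  have hrz : r < z := by linarith
  have hπ : (0:ℝ) < Real.pi := Real.pi_pos
  have h1r2 : (0:ℝ) < 1 - r^2 := by nlinarith
  have hz2r2 : (0:ℝ) < z^2 - r^2 := by nlinarith
  set s1 := Real.sqrt (1 - r^2) with hs1def
  set sz := Real.sqrt (z^2 - r^2) with hszdef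
  have hs1pos : 0 < s1 := Real.sqrt_pos.mpr h1r2
  have hszpos : 0 < sz := Real.sqrt_pos.mpr hz2r2
  have hszsq : sz^2 = z^2 - r^2 := Real.sq_sqrt hz2r2.le
  set f : ℝ → ℝ := fun x => (s1 / (Real.pi * (1 - x^2) * Real.sqrt (r^2 - x^2))) / (z - x)
    with hfdef
  set F : ℝ → ℝ := fun x =>
    (-(1/(2*Real.pi*(z-1)))) * Real.arcsin ((r^2 - 1*x)/(r*(1-x)))
    + (1/(2*Real.pi*(z+1))) * Real.arcsin ((r^2 - 1*(-x))/(r*(1-(-x))))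
    + (s1/(Real.pi*(z^2-1)*sz)) * Real.arcsin ((r^2 - z*x)/(r*(z-x))) with hFdef
  have hz1 : z - 1 ≠ 0 := by linarith
  have hz1' : z + 1 ≠ 0 := by linarith
  have hz21 : z^2 - 1 ≠ 0 := by nlinarith
  have hderiv : ∀ x ∈ Set.Ioo (-r) r, HasDerivAt F (f x) x := by
    intro x hx
    obtain ⟨hx1, hx2⟩ := hx
    have hrx : 0 < r^2 - x^2 := by nlinarith
    have ht : (0:ℝ) < Real.sqrt (r^2-x^2) := Real.sqrt_pos.mpr hrx
    have h1x : 0 < 1 - x := by linarith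
    have h1x' : 0 < 1 + x := by linarith
    have hzx : 0 < z - x := by linarith
    have d1 := hasDerivAt_phi r 1 x hr0 hr1 hx1 hx2
    have d3 := hasDerivAt_phi r z x hr0 hrz hx1 hx2
    have d2' := hasDerivAt_phi r 1 (-x) hr0 hr1 (by linarith) (by linarith)
    have d2 := d2'.comp x (hasDerivAt_neg x)
    have comb := ((d1.const_mul (-(1/(2*Real.pi*(z-1))))).add
      (d2.const_mul (1/(2*Real.pi*(z+1))))).add
      (d3.const_mul (s1/(Real.pi*(z^2-1)*sz)))
    convert comb using 1 <;> try rfl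
    have hnx : Real.sqrt (r^2 - (-x)^2) = Real.sqrt (r^2 - x^2) := by rw [neg_sq]
    rw [hfdef]
    simp only [hnx]
    have hsq1 : Real.sqrt (1^2 - r^2) = s1 := by norm_num [hs1def]
    rw [hsq1]
    have h1nx : (1:ℝ) - -x = 1 + x := by ring
    rw [h1nx]
    have h1x2 : (1:ℝ) - x^2 ≠ 0 := by nlinarith
    field_simp [ht.ne', hπ.ne', h1x.ne', h1x'.ne', hzx.ne', hz1, hz1', hz21, hszpos.ne', h1x2]
    ring
  have hcont : ContinuousOn F (Set.Icc (-r) r) := by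
    have harc : Continuous Real.arcsin := Real.continuous_arcsin
    have key : ∀ a : ℝ, r < a → ContinuousOn
        (fun x : ℝ => Real.arcsin ((r^2 - a*x)/(r*(a-x)))) (Set.Icc (-r) r) := by
      intro a ha
      apply harc.comp_continuousOn
      apply ContinuousOn.div
      · fun_prop
      · fun_prop
      · intro x hx
        have : 0 < a - x := by
          have := hx.2
          linarith
        positivity
    have k1 := key 1 hr1
    have kz := key z hrz
    have k2 : ContinuousOn
        (fun x : ℝ => Real.arcsin ((r^2 - 1*(-x))/(r*(1-(-x))))) (Set.Icc (-r) r) := by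
      have := k1.comp (continuous_neg.continuousOn (s := Set.Icc (-r) r))
        (fun x hx => by
          simp only [Set.mem_Icc] at hx ⊢
          constructor <;> linarith [hx.1, hx.2])
      exact this
    exact ((continuousOn_const.mul k1).add (continuousOn_const.mul k2)).add
      (continuousOn_const.mul kz)
  have hpos : ∀ x ∈ Set.Ioo (-r) r, 0 ≤ f x := by
    intro x hx
    obtain ⟨hx1, hx2⟩ := hx
    have hrx : 0 < r^2 - x^2 := by nlinarith
    have ht : (0:ℝ) < Real.sqrt (r^2-x^2) := Real.sqrt_pos.mpr hrx
    have h1x2 : 0 < 1 - x^2 := by nlinarith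
    have hzx : 0 < z - x := by linarith
    exact (div_pos (div_pos hs1pos (by positivity)) hzx).le
  have hint : IntervalIntegrable f MeasureTheory.volume (-r) r := by
    apply intervalIntegral.intervalIntegrable_deriv_of_nonneg (g := F)
    · rwa [Set.uIcc_of_le (by linarith)]
    · rwa [min_eq_left (by linarith : -r ≤ r), max_eq_right (by linarith : -r ≤ r)]
    · rwa [min_eq_left (by linarith : -r ≤ r), max_eq_right (by linarith : -r ≤ r)]
  have hftc := intervalIntegral.integral_eq_sub_of_hasDerivAt_of_le
    (by linarith : -r ≤ r) hcont hderiv hint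
  rw [hftc]
  -- endpoint values
  have e1 : (r^2 - 1*r)/(r*(1-r)) = -1 := by
    rw [show r^2 - 1*r = -(r*(1-r)) by ring, neg_div,
      div_self (ne_of_gt (mul_pos hr0 (by linarith : (0:ℝ) < 1 - r)))]
  have e2 : (r^2 - 1*(-r))/(r*(1-(-r))) = 1 := by
    rw [show r^2 - 1*(-r) = r*(1-(-r)) by ring,
      div_self (ne_of_gt (mul_pos hr0 (by linarith : (0:ℝ) < 1 - (-r))))]
  have e3 : (r^2 - z*r)/(r*(z-r)) = -1 := by
    rw [show r^2 - z*r = -(r*(z-r)) by ring, neg_div,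
      div_self (ne_of_gt (mul_pos hr0 (by linarith : (0:ℝ) < z - r)))]
  have e4 : (r^2 - 1*(-r))/(r*(1-(-r))) = 1 := e2
  have e5 : (r^2 - 1*(-(-r)))/(r*(1-(-(-r)))) = -1 := by rw [neg_neg]; exact e1
  have e6 : (r^2 - z*(-r))/(r*(z-(-r))) = 1 := by
    rw [show r^2 - z*(-r) = r*(z-(-r)) by ring,
      div_self (ne_of_gt (mul_pos hr0 (by linarith : (0:ℝ) < z - (-r))))]
  rw [hFdef]
  simp only [e1, e2, e3, e5, e6, Real.arcsin_one, Real.arcsin_neg_one]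
  rw [← hszsq]
  field_simp
  ring
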